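/- arXiv:2510.24884 — 5 statements merged into one kernel-verified Lean document; each statement's English description precedes it below -/
import Mathlib

section
/- The set function M(A) = corr((1/|A|)·∑_{j∈A} x_j, y), mapping a nonempty subset A of column indices to the Pearson correlation of the averaged selected columns with y, is not submodular in general: there exist vectors x_1, x_2, x_3, y ∈ R^n and nested sets A = {1} ⊆ B = {1,2} with 3 ∉ B such that M(A ∪ {3}) − M(A) < M(B ∪ {3}) − M(B). -/
noncomputable def center {n : ℕ} (v : Fin n → ℝ) : Fin n → ℝ :=
  fun i => v i - (∑ j, v j) / n

noncomputable def vnorm {n : ℕ} (v : Fin n → ℝ) : ℝ :=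
  Real.sqrt (∑ i, (v i) ^ 2)

noncomputable def pcorr {n : ℕ} (x y : Fin n → ℝ) : ℝ :=
  (∑ i, center x i * center y i) / (vnorm (center x) * vnorm (center y))

theorem pearson_selection_not_submodular :
    ∃ (n : ℕ) (x1 x2 x3 y : Fin n → ℝ),
      vnorm (center y) ≠ 0 ∧
      pcorr (fun i => (x1 i + x3 i) / 2) y - pcorr x1 y <
        pcorr (fun i => (x1 i + x2 i + x3 i) / 3) y -
          pcorr (fun i => (x1 i + x2 i) / 2) y := by
  refine ⟨4, ![1,-1,0,0], ![0,0,1,-1], ![1,-1,0,0], ![1,-1,0,0], ?_, ?_⟩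
  · simp [vnorm, center, Fin.sum_univ_four]
  · simp [pcorr, vnorm, center, Fin.sum_univ_four]
    norm_num
    have h9 : Real.sqrt 9 = 3 := by
      rw [show (9:ℝ) = 3^2 by norm_num, Real.sqrt_sq]; norm_num
    have h2 : (0:ℝ) < Real.sqrt 2 := Real.sqrt_pos.mpr (by norm_num)
    have h10 : (0:ℝ) < Real.sqrt 10 := Real.sqrt_pos.mpr (by norm_num)
    rw [inv_eq_one_div, div_lt_div_iff₀ h2 (by positivity)]
    have s2 : Real.sqrt 2 ^ 2 = 2 := Real.sq_sqrt (by norm_num)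
    have s10 : Real.sqrt 10 ^ 2 = 10 := Real.sq_sqrt (by norm_num)
    have : Real.sqrt 10 < 4 := by nlinarith
    nlinarith
end

section
/- Bounded effect of a new selected example on Pearson correlation of transformed accuracies: let z_i^{(S)} ∈ [α,1−α] be the average over S selected examples of model i's 0–1 correctness, and suppose adding one example keeps z_i^{(S+1)} ∈ [α,1−α]. With x_i = Φ⁻¹(z_i^{(S)}), x_i' = Φ⁻¹(z_i^{(S+1)}), fixed y_i = Φ⁻¹(w_i) with w_i ∈ [α,1−α], and assuming the centered squared norms of x, x', y are all at least d·v_α where v_α = α(1−α)/L_α², then |corr(x',y) − corr(x,y)| ≤ κ·M_α/(S+1) with κ = 2L_α³/(α(1−α)), where L_α is the Lipschitz constant of Φ⁻¹ on [α,1−α] and M_α = max{|Φ⁻¹(α)|,|Φ⁻¹(1−α)|}. -/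
noncomputable def stdGaussPDF (x : ℝ) : ℝ :=
  Real.exp (-(x ^ 2) / 2) / Real.sqrt (2 * Real.pi)

noncomputable def stdGaussCDF (x : ℝ) : ℝ :=
  ∫ t in Set.Iio x, stdGaussPDF t

noncomputable def probit : ℝ → ℝ :=
  Function.invFun stdGaussCDF

open MeasureTheory Real Set Filter Topology

lemma pdf_pos (x : ℝ) : 0 < stdGaussPDF x := by
  unfold stdGaussPDF
  positivity

lemma pdf_eq : stdGaussPDF = fun x => Real.exp (-(1/2) * x^2) / Real.sqrt (2*Real.pi) := by
  funext x; unfold stdGaussPDF; ring_nf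

lemma pdf_integrable : Integrable stdGaussPDF := by
  rw [pdf_eq]
  exact (integrable_exp_neg_mul_sq (by norm_num)).div_const _

lemma pdf_continuous : Continuous stdGaussPDF := by
  unfold stdGaussPDF
  fun_prop

lemma pdf_total : ∫ t, stdGaussPDF t = 1 := by
  rw [pdf_eq, integral_div, integral_gaussian]
  rw [div_eq_one_iff_eq (by positivity)]
  ring

lemma cdf_eq_Iic (x : ℝ) : stdGaussCDF x = ∫ t in Iic x, stdGaussPDF t :=
  integral_Iic_eq_integral_Iio.symm

lemma cdf_sub (a b : ℝ) :
    stdGaussCDF b - stdGaussCDF a = ∫ t in a..b, stdGaussPDF t := by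
  rw [cdf_eq_Iic, cdf_eq_Iic]
  exact intervalIntegral.integral_Iic_sub_Iic pdf_integrable.integrableOn pdf_integrable.integrableOn

lemma cdf_strictMono : StrictMono stdGaussCDF := by
  intro a b hab
  have h : 0 < ∫ t in a..b, stdGaussPDF t :=
    intervalIntegral.intervalIntegral_pos_of_pos pdf_integrable.intervalIntegrable pdf_pos hab
  have := cdf_sub a b
  linarith

lemma cdf_continuous : Continuous stdGaussCDF := by
  have h : Continuous fun b => ∫ t in (0:ℝ)..b, stdGaussPDF t :=
    pdf_integrable.continuous_primitive 0
  have he : stdGaussCDF = fun b => stdGaussCDF 0 + ∫ t in (0:ℝ)..b, stdGaussPDF t := by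
    funext b; have := cdf_sub 0 b; linarith
  rw [he]; exact continuous_const.add h

lemma cdf_tendsto_atTop : Tendsto stdGaussCDF atTop (𝓝 1) := by
  have h := (MeasureTheory.aecover_Iio (μ := (volume : Measure ℝ))
      (tendsto_id (α := ℝ))).integral_tendsto_of_countably_generated pdf_integrable
  rw [pdf_total] at h
  exact h

lemma cdf_tendsto_atBot : Tendsto stdGaussCDF atBot (𝓝 0) := by
  have h := (MeasureTheory.aecover_Ici (μ := (volume : Measure ℝ))
      (tendsto_id (α := ℝ))).integral_tendsto_of_countably_generated pdf_integrable
  rw [pdf_total] at h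
  have he : ∀ a : ℝ, stdGaussCDF a = 1 - ∫ t in Ici a, stdGaussPDF t := by
    intro a
    have := intervalIntegral.integral_Iio_add_Ici (b := a) (f := stdGaussPDF) (μ := volume)
      pdf_integrable.integrableOn pdf_integrable.integrableOn
    rw [pdf_total] at this
    unfold stdGaussCDF
    linarith
  rw [show stdGaussCDF = fun a : ℝ => 1 - ∫ t in Ici a, stdGaussPDF t from funext he]
  have : Tendsto (fun a : ℝ => 1 - ∫ t in Ici a, stdGaussPDF t) atBot (𝓝 (1 - 1)) :=
    tendsto_const_nhds.sub h
  simpa using this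

lemma cdf_surj {p : ℝ} (h0 : 0 < p) (h1 : p < 1) : ∃ x, stdGaussCDF x = p := by
  obtain ⟨a, ha⟩ := (cdf_tendsto_atBot.eventually_lt_const h0).exists
  obtain ⟨b, hb⟩ := (cdf_tendsto_atTop.eventually_const_lt h1).exists
  have hab : a ≤ b := by
    by_contra h
    push_neg at h
    have := cdf_strictMono h
    linarith
  have := intermediate_value_Icc hab cdf_continuous.continuousOn
  have hp : p ∈ Icc (stdGaussCDF a) (stdGaussCDF b) := ⟨ha.le, hb.le⟩
  obtain ⟨x, _, hx⟩ := this hp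
  exact ⟨x, hx⟩

lemma cdf_probit {p : ℝ} (h0 : 0 < p) (h1 : p < 1) : stdGaussCDF (probit p) = p :=
  Function.invFun_eq (cdf_surj h0 h1)

lemma probit_le_probit {p q : ℝ} (h0 : 0 < p) (hpq : p ≤ q) (h1 : q < 1) :
    probit p ≤ probit q := by
  by_contra h
  push_neg at h
  have := cdf_strictMono h
  rw [cdf_probit (lt_of_lt_of_le h0 hpq) h1, cdf_probit h0 (lt_of_le_of_lt hpq h1)] at this
  linarith

lemma probit_abs_le {a p : ℝ} (ha : 0 < a) (ha2 : a < 1/2) (hp : p ∈ Icc a (1-a)) :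
    |probit p| ≤ max |probit a| |probit (1-a)| := by
  have h1 : probit a ≤ probit p := probit_le_probit ha hp.1 (by
    have := hp.2; linarith)
  have h2 : probit p ≤ probit (1-a) :=
    probit_le_probit (lt_of_lt_of_le ha hp.1) hp.2 (by linarith)
  rw [abs_le]
  constructor
  · calc -(max |probit a| |probit (1-a)|) ≤ -|probit a| := by
          exact neg_le_neg (le_max_left _ _)
      _ ≤ probit a := neg_abs_le _
      _ ≤ probit p := h1
  · exact h2.trans ((le_abs_self _).trans (le_max_right _ _))

noncomputable def toE {n : ℕ} (v : Fin n → ℝ) : EuclideanSpace ℝ (Fin n) :=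
  (WithLp.equiv 2 _).symm v

lemma toE_apply {n : ℕ} (v : Fin n → ℝ) (i : Fin n) : toE v i = v i := rfl

lemma toE_sub {n : ℕ} (a b : Fin n → ℝ) :
    toE a - toE b = toE (fun i => a i - b i) := rfl

lemma vnorm_eq {n : ℕ} (v : Fin n → ℝ) : vnorm v = ‖toE v‖ := by
  rw [EuclideanSpace.norm_eq]
  unfold vnorm
  congr 1
  refine Finset.sum_congr rfl fun i _ => ?_
  rw [toE_apply, Real.norm_eq_abs, sq_abs]

lemma inner_toE {n : ℕ} (u v : Fin n → ℝ) :
    (inner ℝ (toE u) (toE v) : ℝ) = ∑ i, u i * v i := by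
  simp [toE, PiLp.inner_apply, RCLike.inner_apply, conj_trivial]
  exact Finset.sum_congr rfl fun i _ => mul_comm _ _

lemma sum_center_sq_le {n : ℕ} (v : Fin n → ℝ) :
    ∑ i, (center v i) ^ 2 ≤ ∑ i, (v i) ^ 2 := by
  rcases Nat.eq_zero_or_pos n with h | h
  · subst h; simp
  set m : ℝ := (∑ j, v j) / n with hm
  have hn : (n : ℝ) ≠ 0 := Nat.cast_ne_zero.mpr h.ne'
  have hsum : ∑ j, v j = n * m := by rw [hm]; field_simp
  have expand : ∀ i : Fin n, (center v i) ^ 2 = (v i) ^ 2 - 2 * m * v i + m ^ 2 := by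
    intro i; simp only [_root_.center, ← hm]; ring
  calc ∑ i, (center v i) ^ 2
      = ∑ i, ((v i) ^ 2 - 2 * m * v i + m ^ 2) := Finset.sum_congr rfl fun i _ => expand i
    _ = (∑ i, (v i) ^ 2) - 2 * m * (∑ i, v i) + n * m ^ 2 := by
        rw [Finset.sum_add_distrib, Finset.sum_sub_distrib, ← Finset.mul_sum,
          Finset.sum_const, Finset.card_univ, Fintype.card_fin, nsmul_eq_mul]
    _ = (∑ i, (v i) ^ 2) - n * m ^ 2 := by rw [hsum]; ring
    _ ≤ ∑ i, (v i) ^ 2 := by nlinarith [mul_nonneg (Nat.cast_nonneg n : (0:ℝ) ≤ n) (sq_nonneg m)]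

lemma center_sub {n : ℕ} (a b : Fin n → ℝ) (i : Fin n) :
    center a i - center b i = center (fun j => a j - b j) i := by
  simp only [_root_.center, Finset.sum_sub_distrib, sub_div]; ring

lemma corr_diff_le {F : Type*} [NormedAddCommGroup F] [InnerProductSpace ℝ F]
    (u u' v : F) (D : ℝ) (hD : 0 < D)
    (hu : D ≤ ‖u‖) (hu' : D ≤ ‖u'‖) (hv : D ≤ ‖v‖) :
    |(inner ℝ u' v : ℝ) / (‖u'‖ * ‖v‖) - (inner ℝ u v : ℝ) / (‖u‖ * ‖v‖)| ≤ 2 * ‖u' - u‖ / D := by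
  have ha : 0 < ‖u‖ := lt_of_lt_of_le hD hu
  have ha' : 0 < ‖u'‖ := lt_of_lt_of_le hD hu'
  have hb : 0 < ‖v‖ := lt_of_lt_of_le hD hv
  have key : (inner ℝ u' v : ℝ) / (‖u'‖ * ‖v‖) - (inner ℝ u v : ℝ) / (‖u‖ * ‖v‖)
      = (inner ℝ (u' - u) v : ℝ) / (‖u'‖ * ‖v‖)
        + (inner ℝ u v : ℝ) * (‖u‖ - ‖u'‖) / (‖u‖ * ‖u'‖ * ‖v‖) := by
    rw [inner_sub_left]
    field_simp
    ring
  have h1 : |(inner ℝ (u' - u) v : ℝ) / (‖u'‖ * ‖v‖)| ≤ ‖u' - u‖ / D := by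
    rw [abs_div, abs_of_pos (mul_pos ha' hb)]
    calc |(inner ℝ (u' - u) v : ℝ)| / (‖u'‖ * ‖v‖)
        ≤ (‖u' - u‖ * ‖v‖) / (‖u'‖ * ‖v‖) := by
          gcongr
          exact abs_real_inner_le_norm _ _
      _ = ‖u' - u‖ / ‖u'‖ := mul_div_mul_right _ _ hb.ne'
      _ ≤ ‖u' - u‖ / D := by gcongr
  have h2 : |(inner ℝ u v : ℝ) * (‖u‖ - ‖u'‖) / (‖u‖ * ‖u'‖ * ‖v‖)| ≤ ‖u' - u‖ / D := by
    rw [abs_div, abs_of_pos (mul_pos (mul_pos ha ha') hb), abs_mul]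
    have hin : |(inner ℝ u v : ℝ)| ≤ ‖u‖ * ‖v‖ := abs_real_inner_le_norm _ _
    have hnn : |‖u‖ - ‖u'‖| ≤ ‖u' - u‖ := by
      rw [← norm_neg (u' - u), neg_sub]
      exact abs_norm_sub_norm_le _ _
    calc |(inner ℝ u v : ℝ)| * |‖u‖ - ‖u'‖| / (‖u‖ * ‖u'‖ * ‖v‖)
        ≤ (‖u‖ * ‖v‖) * ‖u' - u‖ / (‖u‖ * ‖u'‖ * ‖v‖) := by
          gcongr
      _ = ‖u' - u‖ / ‖u'‖ := by field_simp
      _ ≤ ‖u' - u‖ / D := by gcongr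
  calc |(inner ℝ u' v : ℝ) / (‖u'‖ * ‖v‖) - (inner ℝ u v : ℝ) / (‖u‖ * ‖v‖)|
      = |(inner ℝ (u' - u) v : ℝ) / (‖u'‖ * ‖v‖)
          + (inner ℝ u v : ℝ) * (‖u‖ - ‖u'‖) / (‖u‖ * ‖u'‖ * ‖v‖)| := by rw [key]
    _ ≤ |(inner ℝ (u' - u) v : ℝ) / (‖u'‖ * ‖v‖)|
          + |(inner ℝ u v : ℝ) * (‖u‖ - ‖u'‖) / (‖u‖ * ‖u'‖ * ‖v‖)| := abs_add_le _ _
    _ ≤ ‖u' - u‖ / D + ‖u' - u‖ / D := add_le_add h1 h2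
    _ = 2 * ‖u' - u‖ / D := by ring

theorem pearson_bounded_effect_of_new_example {d : ℕ} (S : ℕ)
    (α Lα : ℝ) (hα : 0 < α) (hα2 : α < 1 / 2) (hLα : 0 < Lα)
    (hLip : ∀ p ∈ Set.Icc α (1 - α), ∀ q ∈ Set.Icc α (1 - α),
      |probit p - probit q| ≤ Lα * |p - q|)
    (z z' w : Fin d → ℝ)
    (hz : ∀ i, z i ∈ Set.Icc α (1 - α))
    (hz' : ∀ i, z' i ∈ Set.Icc α (1 - α))
    (hw : ∀ i, w i ∈ Set.Icc α (1 - α))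
    (hchange : ∀ i, |z' i - z i| ≤ 1 / (S + 1))
    (x : Fin d → ℝ) (hxdef : x = fun i => probit (z i))
    (x' : Fin d → ℝ) (hx'def : x' = fun i => probit (z' i))
    (y : Fin d → ℝ) (hydef : y = fun i => probit (w i))
    (hvx : (d : ℝ) * (α * (1 - α) / Lα ^ 2) ≤ ∑ i, (center x i) ^ 2)
    (hvx' : (d : ℝ) * (α * (1 - α) / Lα ^ 2) ≤ ∑ i, (center x' i) ^ 2)
    (hvy : (d : ℝ) * (α * (1 - α) / Lα ^ 2) ≤ ∑ i, (center y i) ^ 2) :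
    |pcorr x' y - pcorr x y| ≤
      (2 * Lα ^ 3 / (α * (1 - α))) *
        (max |probit α| |probit (1 - α)|) / (S + 1) := by
  have hA : 0 < α * (1 - α) := by nlinarith
  set M := max |probit α| |probit (1 - α)| with hM
  have hMnn : 0 ≤ M := le_trans (abs_nonneg _) (le_max_left _ _)
  have hS : (0:ℝ) < (S:ℝ) + 1 := by positivity
  have hRHS : 0 ≤ 2 * Lα ^ 3 / (α * (1 - α)) * M / ((S:ℝ) + 1) :=
    div_nonneg (mul_nonneg (div_nonneg (by positivity) hA.le) hMnn) hS.le
  rcases Nat.eq_zero_or_pos d with hd | hd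
  · subst hd
    have h0 : ∀ a b : Fin 0 → ℝ, pcorr a b = 0 := by
      intro a b
      simp [pcorr]
    rw [h0, h0]
    simpa using hRHS
  have hdpos : (0:ℝ) < d := Nat.cast_pos.mpr hd
  -- coordinate bounds
  have hbx : ∀ i, |x i| ≤ M := by
    intro i; rw [hxdef]; exact probit_abs_le hα hα2 (hz i)
  have hby : ∀ i, |y i| ≤ M := by
    intro i; rw [hydef]; exact probit_abs_le hα hα2 (hw i)
  -- per-coordinate change bound
  set c := Lα / ((S:ℝ) + 1) with hc
  have hcpos : 0 < c := by positivity
  have hδ : ∀ i, |x' i - x i| ≤ c := by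
    intro i
    rw [hxdef, hx'def]
    calc |probit (z' i) - probit (z i)| ≤ Lα * |z' i - z i| :=
          hLip _ (hz' i) _ (hz i)
      _ ≤ Lα * (1 / ((S:ℝ) + 1)) := by
          have := hchange i
          gcongr
      _ = c := by rw [hc]; ring
  -- norm of the difference of centered vectors
  have hdelta : ‖toE (center x') - toE (center x)‖ ≤ Real.sqrt d * c := by
    rw [toE_sub, ← vnorm_eq]
    unfold vnorm
    have h1 : ∑ i, (center x' i - center x i) ^ 2 ≤ (d:ℝ) * c ^ 2 := by
      calc ∑ i, (center x' i - center x i) ^ 2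
          = ∑ i, (center (fun j => x' j - x j) i) ^ 2 :=
            Finset.sum_congr rfl fun i _ => by rw [center_sub]
        _ ≤ ∑ i, (x' i - x i) ^ 2 := sum_center_sq_le _
        _ ≤ ∑ _i : Fin d, c ^ 2 := by
            refine Finset.sum_le_sum fun i _ => ?_
            rw [← sq_abs]
            exact pow_le_pow_left₀ (abs_nonneg _) (hδ i) 2
        _ = (d:ℝ) * c ^ 2 := by
            rw [Finset.sum_const, Finset.card_univ, Fintype.card_fin, nsmul_eq_mul]
    calc Real.sqrt (∑ i, (center x' i - center x i) ^ 2)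
        ≤ Real.sqrt ((d:ℝ) * c ^ 2) := Real.sqrt_le_sqrt h1
      _ = Real.sqrt d * c := by
          rw [Real.sqrt_mul (by positivity), Real.sqrt_sq hcpos.le]
  -- norm lower bounds
  set vα := α * (1 - α) / Lα ^ 2 with hvα
  have hvαpos : 0 < vα := by positivity
  set D := Real.sqrt ((d:ℝ) * vα) with hD
  have hDpos : 0 < D := Real.sqrt_pos.mpr (by positivity)
  have hDx : D ≤ ‖toE (center x)‖ := by
    rw [← vnorm_eq]; exact Real.sqrt_le_sqrt hvx
  have hDx' : D ≤ ‖toE (center x')‖ := by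
    rw [← vnorm_eq]; exact Real.sqrt_le_sqrt hvx'
  have hDy : D ≤ ‖toE (center y)‖ := by
    rw [← vnorm_eq]; exact Real.sqrt_le_sqrt hvy
  -- abstract bound
  have hmain := corr_diff_le (toE (center x)) (toE (center x')) (toE (center y))
    D hDpos hDx hDx' hDy
  have hp' : pcorr x' y = (inner ℝ (toE (center x')) (toE (center y)) : ℝ) /
      (‖toE (center x')‖ * ‖toE (center y)‖) := by
    unfold pcorr; rw [inner_toE, vnorm_eq, vnorm_eq]
  have hp : pcorr x y = (inner ℝ (toE (center x)) (toE (center y)) : ℝ) /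
      (‖toE (center x)‖ * ‖toE (center y)‖) := by
    unfold pcorr; rw [inner_toE, vnorm_eq, vnorm_eq]
  rw [hp', hp]
  -- step 6 : sqrt vα ≤ M
  have hsum2 : ∑ i, (x i) ^ 2 ≤ (d:ℝ) * M ^ 2 := by
    calc ∑ i, (x i) ^ 2 ≤ ∑ _i : Fin d, M ^ 2 := by
          refine Finset.sum_le_sum fun i _ => ?_
          rw [← sq_abs]
          exact pow_le_pow_left₀ (abs_nonneg _) (hbx i) 2
      _ = (d:ℝ) * M ^ 2 := by
          rw [Finset.sum_const, Finset.card_univ, Fintype.card_fin, nsmul_eq_mul]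
  have hvM : vα ≤ M ^ 2 := by
    have h1 : (d:ℝ) * vα ≤ (d:ℝ) * M ^ 2 :=
      le_trans hvx (le_trans (sum_center_sq_le x) hsum2)
    exact le_of_mul_le_mul_left h1 hdpos
  have hsv : Real.sqrt vα ≤ M := by
    calc Real.sqrt vα ≤ Real.sqrt (M ^ 2) := Real.sqrt_le_sqrt hvM
      _ = M := Real.sqrt_sq hMnn
  have hsvpos : 0 < Real.sqrt vα := Real.sqrt_pos.mpr hvαpos
  have hsd : 0 < Real.sqrt d := Real.sqrt_pos.mpr hdpos
  -- numeric chain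
  have hDval : D = Real.sqrt d * Real.sqrt vα := Real.sqrt_mul (by positivity) _
  have hstep1 : 2 * ‖toE (center x') - toE (center x)‖ / D ≤ 2 * (Real.sqrt d * c) / D := by
    gcongr
  have hstep2 : 2 * (Real.sqrt d * c) / D = 2 * c / Real.sqrt vα := by
    rw [hDval]
    field_simp
  have hstep3 : 2 * c / Real.sqrt vα ≤ 2 * c * M / vα := by
    rw [div_le_div_iff₀ hsvpos hvαpos]
    have hv : vα = Real.sqrt vα * Real.sqrt vα := (Real.mul_self_sqrt hvαpos.le).symm
    nlinarith [mul_le_mul_of_nonneg_left hsv (le_of_lt (mul_pos (mul_pos two_pos hcpos) hsvpos))]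
  have hstep4 : 2 * c * M / vα = 2 * Lα ^ 3 / (α * (1 - α)) * M / ((S:ℝ) + 1) := by
    rw [hc, hvα]
    field_simp
  calc |(inner ℝ (toE (center x')) (toE (center y)) : ℝ) /
        (‖toE (center x')‖ * ‖toE (center y)‖) -
        (inner ℝ (toE (center x)) (toE (center y)) : ℝ) /
        (‖toE (center x)‖ * ‖toE (center y)‖)|
      ≤ 2 * ‖toE (center x') - toE (center x)‖ / D := hmain
    _ ≤ 2 * (Real.sqrt d * c) / D := hstep1
    _ = 2 * c / Real.sqrt vα := hstep2
    _ ≤ 2 * c * M / vα := hstep3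
    _ = 2 * Lα ^ 3 / (α * (1 - α)) * M / ((S:ℝ) + 1) := hstep4
end

section
/- Bounded effect of adding one model on Pearson correlation: let (x_i, y_i)_{i=1}^N be pairs with |x_i|, |y_i| ≤ B, and suppose the centered squared norms of x and y are each at least N·v for some v > 0 and remain at least (N+1)·v after appending a new pair (x_{N+1}, y_{N+1}) with |x_{N+1}|, |y_{N+1}| ≤ B. Then |ρ_{N+1} − ρ_N| ≤ κ·B²/(N·v) for an absolute constant κ, where ρ_N and ρ_{N+1} are the sample Pearson correlations before and after the addition. -/
lemma sum_center {n : ℕ} (hn : (n:ℝ) ≠ 0) (f : Fin n → ℝ) : ∑ i, center f i = 0 := by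
  simp only [center, Finset.sum_sub_distrib, Finset.sum_const, Finset.card_univ,
    Fintype.card_fin, nsmul_eq_mul]
  field_simp
  ring

lemma abs_mean_le {n : ℕ} (hn : 0 < n) {f : Fin n → ℝ} {B : ℝ} (h : ∀ i, |f i| ≤ B) :
    |(∑ i, f i) / n| ≤ B := by
  have hn' : (0:ℝ) < n := by exact_mod_cast hn
  rw [abs_div, abs_of_pos hn', div_le_iff₀ hn']
  calc |∑ i, f i| ≤ ∑ i, |f i| := Finset.abs_sum_le_sum_abs _ _
    _ ≤ ∑ _i : Fin n, B := Finset.sum_le_sum (fun i _ => h i)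
    _ = B * n := by simp [mul_comm]

lemma append_id {N : ℕ} (hN : (N:ℝ) ≠ 0) (x y : Fin (N+1) → ℝ) :
    ∑ i, center x i * center y i
      = (∑ j, center (fun j : Fin N => x j.castSucc) j * center (fun j : Fin N => y j.castSucc) j)
        + (N:ℝ) * ((∑ j : Fin N, x j.castSucc)/(N:ℝ) - (∑ i, x i)/((N:ℝ)+1))
            * ((∑ j : Fin N, y j.castSucc)/(N:ℝ) - (∑ i, y i)/((N:ℝ)+1))
        + (x (Fin.last N) - (∑ i, x i)/((N:ℝ)+1)) * (y (Fin.last N) - (∑ i, y i)/((N:ℝ)+1)) := by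
  set a := (∑ j : Fin N, x j.castSucc)/(N:ℝ) with ha
  set b := (∑ j : Fin N, y j.castSucc)/(N:ℝ) with hb
  set A := (∑ i, x i)/((N:ℝ)+1) with hA
  set B' := (∑ i, y i)/((N:ℝ)+1) with hB'
  have hcx : ∀ i : Fin (N+1), center x i = x i - A := by
    intro i; simp only [center, hA]; push_cast; ring
  have hcy : ∀ i : Fin (N+1), center y i = y i - B' := by
    intro i; simp only [center, hB']; push_cast; ring
  have hcx' : ∀ j : Fin N, center (fun j : Fin N => x j.castSucc) j = x j.castSucc - a := by
    intro j; simp only [center, ha]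
  have hcy' : ∀ j : Fin N, center (fun j : Fin N => y j.castSucc) j = y j.castSucc - b := by
    intro j; simp only [center, hb]
  have hzx : ∑ j : Fin N, (x j.castSucc - a) = 0 := by
    have := sum_center hN (fun j : Fin N => x j.castSucc)
    simpa [hcx'] using this
  have hzy : ∑ j : Fin N, (y j.castSucc - b) = 0 := by
    have := sum_center hN (fun j : Fin N => y j.castSucc)
    simpa [hcy'] using this
  rw [Fin.sum_univ_castSucc]
  have h1 : ∑ j : Fin N, center x j.castSucc * center y j.castSucc
      = ∑ j : Fin N, ((x j.castSucc - a) * (y j.castSucc - b)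
          + ((b - B') * (x j.castSucc - a) + ((a - A) * (y j.castSucc - b) + (a - A) * (b - B')))) := by
    refine Finset.sum_congr rfl fun j _ => ?_
    rw [hcx, hcy]; ring
  rw [h1, Finset.sum_add_distrib, Finset.sum_add_distrib, Finset.sum_add_distrib,
    ← Finset.mul_sum, ← Finset.mul_sum, hzx, hzy, Finset.sum_const, Finset.card_univ,
    Fintype.card_fin, nsmul_eq_mul, hcx, hcy]
  have h2 : ∑ j : Fin N, center (fun j : Fin N => x j.castSucc) j * center (fun j : Fin N => y j.castSucc) j
      = ∑ j : Fin N, (x j.castSucc - a) * (y j.castSucc - b) := by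
    refine Finset.sum_congr rfl fun j _ => ?_
    rw [hcx', hcy']
  rw [h2]; ring

lemma mean_diff {N : ℕ} (hN : (N:ℝ) ≠ 0) (x : Fin (N+1) → ℝ) :
    (∑ j : Fin N, x j.castSucc)/(N:ℝ) - (∑ i, x i)/((N:ℝ)+1)
      = ((∑ j : Fin N, x j.castSucc)/(N:ℝ) - x (Fin.last N))/((N:ℝ)+1) := by
  have hN1 : ((N:ℝ)+1) ≠ 0 := by positivity
  rw [Fin.sum_univ_castSucc (f := x)]
  field_simp
  ring

set_option maxHeartbeats 1000000 in
lemma main_arith (S S' Qx Qy Qx' Qy' n v B : ℝ)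
    (hn : 1 ≤ n) (hv : 0 < v)
    (hQx : n * v ≤ Qx) (hQy : n * v ≤ Qy)
    (hQx' : (n + 1) * v ≤ Qx') (hQy' : (n + 1) * v ≤ Qy')
    (hxle : Qx ≤ Qx') (hyle : Qy ≤ Qy')
    (hdx : Qx' - Qx ≤ 8 * B ^ 2) (hdy : Qy' - Qy ≤ 8 * B ^ 2)
    (hS : |S' - S| ≤ 8 * B ^ 2)
    (hCS : S ^ 2 ≤ Qx * Qy) :
    |S' / (Real.sqrt Qx' * Real.sqrt Qy') - S / (Real.sqrt Qx * Real.sqrt Qy)|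
      ≤ 24 * B ^ 2 / (n * v) := by
  have hn0 : (0:ℝ) < n := lt_of_lt_of_le one_pos hn
  have hB2 : (0:ℝ) ≤ B ^ 2 := sq_nonneg B
  have hQx0 : 0 < Qx := lt_of_lt_of_le (by positivity) hQx
  have hQy0 : 0 < Qy := lt_of_lt_of_le (by positivity) hQy
  have hQx'0 : 0 < Qx' := lt_of_lt_of_le (by positivity) hQx'
  have hQy'0 : 0 < Qy' := lt_of_lt_of_le (by positivity) hQy'
  set Dx := Real.sqrt Qx with hDxd
  set Dy := Real.sqrt Qy with hDyd
  set Dx' := Real.sqrt Qx' with hDx'd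
  set Dy' := Real.sqrt Qy' with hDy'd
  have hDx0 : 0 < Dx := Real.sqrt_pos.2 hQx0
  have hDy0 : 0 < Dy := Real.sqrt_pos.2 hQy0
  have hDx'0 : 0 < Dx' := Real.sqrt_pos.2 hQx'0
  have hDy'0 : 0 < Dy' := Real.sqrt_pos.2 hQy'0
  set D := Dx * Dy with hDd
  set D' := Dx' * Dy' with hD'd
  have hD0 : 0 < D := mul_pos hDx0 hDy0
  have hD'0 : 0 < D' := mul_pos hDx'0 hDy'0
  have hD2 : D ^ 2 = Qx * Qy := by
    rw [hDd, mul_pow, hDxd, hDyd, Real.sq_sqrt hQx0.le, Real.sq_sqrt hQy0.le]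
  have hD'2 : D' ^ 2 = Qx' * Qy' := by
    rw [hD'd, mul_pow, hDx'd, hDy'd, Real.sq_sqrt hQx'0.le, Real.sq_sqrt hQy'0.le]
  have hDle : D ≤ D' :=
    mul_le_mul (Real.sqrt_le_sqrt hxle) (Real.sqrt_le_sqrt hyle) hDy0.le hDx'0.le
  have hSD : |S| ≤ D := by
    have h := Real.sqrt_le_sqrt (hCS.trans_eq hD2.symm)
    rwa [Real.sqrt_sq_eq_abs, Real.sqrt_sq hD0.le] at h
  have hD'ge : (n + 1) * v ≤ D' := by
    have h1 : ((n+1)*v) * ((n+1)*v) ≤ Qx' * Qy' :=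
      mul_le_mul hQx' hQy' (by positivity) hQx'0.le
    nlinarith [hD'2, hD'0]
  have hnv1 : (0:ℝ) < (n + 1) * v := by positivity
  have key : S' / D' - S / D = (S' - S) / D' + S * (D - D') / (D * D') := by
    field_simp; ring
  have h1 : |(S' - S) / D'| ≤ 8 * B ^ 2 / ((n + 1) * v) := by
    rw [abs_div, abs_of_pos hD'0]
    exact div_le_div₀ (by positivity) hS hnv1 hD'ge
  have h2 : |S * (D - D') / (D * D')| ≤ 16 * B ^ 2 / ((n + 1) * v) := by
    have heq : |S * (D - D') / (D * D')| = |S| * (D' - D) / (D * D') := by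
      rw [abs_div, abs_mul, abs_of_pos (mul_pos hD0 hD'0),
        abs_of_nonpos (sub_nonpos.2 hDle), neg_sub]
    rw [heq]
    have step1 : |S| * (D' - D) / (D * D') ≤ (D' - D) / D' := by
      rw [div_le_div_iff₀ (by positivity) hD'0]
      calc |S| * (D' - D) * D' ≤ D * (D' - D) * D' := by
            have h := mul_le_mul_of_nonneg_right hSD (sub_nonneg.2 hDle)
            exact mul_le_mul_of_nonneg_right h hD'0.le
        _ = (D' - D) * (D * D') := by ring
    have step2 : (D' - D) / D' ≤ (D' ^ 2 - D ^ 2) / D' ^ 2 := by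
      rw [div_le_div_iff₀ hD'0 (by positivity)]
      nlinarith [mul_nonneg (mul_nonneg (sub_nonneg.2 hDle) hD0.le) hD'0.le]
    have hnum : Qx' * Qy' - Qx * Qy ≤ 8 * B ^ 2 * (Qx' + Qy') := by
      have t1 : Qx' * (Qy' - Qy) ≤ Qx' * (8 * B ^ 2) := mul_le_mul_of_nonneg_left hdy hQx'0.le
      have t2 : Qy * (Qx' - Qx) ≤ Qy * (8 * B ^ 2) := mul_le_mul_of_nonneg_left hdx hQy0.le
      have t3 : Qy * (8 * B ^ 2) ≤ Qy' * (8 * B ^ 2) := mul_le_mul_of_nonneg_right hyle (by positivity)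
      nlinarith [t1, t2, t3]
    have step3 : (D' ^ 2 - D ^ 2) / D' ^ 2 ≤ 16 * B ^ 2 / ((n + 1) * v) := by
      rw [hD'2, hD2]
      calc (Qx' * Qy' - Qx * Qy) / (Qx' * Qy')
          ≤ (8 * B ^ 2 * (Qx' + Qy')) / (Qx' * Qy') := by
            gcongr
        _ = 8 * B ^ 2 / Qy' + 8 * B ^ 2 / Qx' := by field_simp
        _ ≤ 8 * B ^ 2 / ((n + 1) * v) + 8 * B ^ 2 / ((n + 1) * v) := by
            gcongr
        _ = 16 * B ^ 2 / ((n + 1) * v) := by ring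
    linarith [step1, step2.trans step3]
  calc |S' / D' - S / D| ≤ |(S' - S) / D'| + |S * (D - D') / (D * D')| := by
        rw [key]; exact abs_add_le _ _
    _ ≤ 8 * B ^ 2 / ((n + 1) * v) + 16 * B ^ 2 / ((n + 1) * v) := add_le_add h1 h2
    _ = 24 * B ^ 2 / ((n + 1) * v) := by ring
    _ ≤ 24 * B ^ 2 / (n * v) := by
        apply div_le_div_of_nonneg_left (by positivity) (by positivity)
        nlinarith [hv]

set_option maxHeartbeats 1000000 in
theorem pearson_bounded_effect_of_new_model :
    ∃ κ : ℝ, 0 < κ ∧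
      ∀ (N : ℕ) (B v : ℝ) (x y : Fin (N + 1) → ℝ),
        0 < N → 0 < v →
        (∀ i, |x i| ≤ B) → (∀ i, |y i| ≤ B) →
        (N : ℝ) * v ≤ ∑ i, (center (fun j : Fin N => x j.castSucc) i) ^ 2 →
        (N : ℝ) * v ≤ ∑ i, (center (fun j : Fin N => y j.castSucc) i) ^ 2 →
        ((N : ℝ) + 1) * v ≤ ∑ i, (center x i) ^ 2 →
        ((N : ℝ) + 1) * v ≤ ∑ i, (center y i) ^ 2 →
        |pcorr x y -
            pcorr (fun j : Fin N => x j.castSucc) (fun j : Fin N => y j.castSucc)| ≤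
          κ * B ^ 2 / (N * v) := by
  refine ⟨24, by norm_num, ?_⟩
  intro N B v x y hN hv hx hy hQxN hQyN hQx1 hQy1
  have hNR : (1:ℝ) ≤ (N:ℝ) := by exact_mod_cast hN
  have hN0 : ((N:ℝ)) ≠ 0 := by positivity
  have hB : (0:ℝ) ≤ B := le_trans (abs_nonneg _) (hx 0)
  -- notation
  set x' : Fin N → ℝ := fun j => x j.castSucc with hx'd
  set y' : Fin N → ℝ := fun j => y j.castSucc with hy'd
  set dxm : ℝ := (∑ j : Fin N, x j.castSucc)/(N:ℝ) - (∑ i, x i)/((N:ℝ)+1) with hdxm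
  set dym : ℝ := (∑ j : Fin N, y j.castSucc)/(N:ℝ) - (∑ i, y i)/((N:ℝ)+1) with hdym
  -- mean bounds
  have haxb : |(∑ j : Fin N, x j.castSucc)/(N:ℝ)| ≤ B := abs_mean_le hN (fun j => hx _)
  have hayb : |(∑ j : Fin N, y j.castSucc)/(N:ℝ)| ≤ B := abs_mean_le hN (fun j => hy _)
  have hAxb : |(∑ i, x i)/((N:ℝ)+1)| ≤ B := by
    have := abs_mean_le (Nat.succ_pos N) hx
    push_cast at this
    exact this
  have hAyb : |(∑ i, y i)/((N:ℝ)+1)| ≤ B := by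
    have := abs_mean_le (Nat.succ_pos N) hy
    push_cast at this
    exact this
  have habs2 : ∀ c m : ℝ, |c| ≤ B → |m| ≤ B → |c - m| ≤ 2*B := by
    intro c m h1 h2
    calc |c - m| ≤ |c| + |m| := abs_sub _ _
      _ ≤ 2*B := by linarith
  -- mean difference bounds
  have hdxb : |dxm| ≤ 2*B/((N:ℝ)+1) := by
    rw [hdxm, mean_diff hN0 x, abs_div, abs_of_pos (by positivity : (0:ℝ) < (N:ℝ)+1)]
    exact div_le_div_of_nonneg_right (habs2 _ _ haxb (hx _)) (by positivity)
  have hdyb : |dym| ≤ 2*B/((N:ℝ)+1) := by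
    rw [hdym, mean_diff hN0 y, abs_div, abs_of_pos (by positivity : (0:ℝ) < (N:ℝ)+1)]
    exact div_le_div_of_nonneg_right (habs2 _ _ hayb (hy _)) (by positivity)
  have hprod : ∀ p q : ℝ, |p| ≤ 2*B/((N:ℝ)+1) → |q| ≤ 2*B/((N:ℝ)+1) →
      (N:ℝ) * |p| * |q| ≤ 4*B^2 := by
    intro p q hp hq
    have h1 : |p| * |q| ≤ (2*B/((N:ℝ)+1)) * (2*B/((N:ℝ)+1)) :=
      mul_le_mul hp hq (abs_nonneg _) (by positivity)
    have h3 : (N:ℝ)/(((N:ℝ)+1)^2) ≤ 1 := by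
      rw [div_le_one (by positivity)]
      nlinarith [hNR]
    calc (N:ℝ)*|p| * |q| = (N:ℝ)*(|p| * |q|) := by ring
      _ ≤ (N:ℝ) * ((2*B/((N:ℝ)+1))*(2*B/((N:ℝ)+1))) := by
          exact mul_le_mul_of_nonneg_left h1 (by positivity)
      _ = 4*B^2 * ((N:ℝ)/(((N:ℝ)+1)^2)) := by field_simp; ring
      _ ≤ 4*B^2 * 1 := mul_le_mul_of_nonneg_left h3 (by positivity)
      _ = 4*B^2 := mul_one _
  -- identities
  set Lx : ℝ := x (Fin.last N) - (∑ i, x i)/((N:ℝ)+1) with hLxd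
  set Ly : ℝ := y (Fin.last N) - (∑ i, y i)/((N:ℝ)+1) with hLyd
  clear_value x' y' dxm dym Lx Ly
  have idS := append_id hN0 x y
  have idX := append_id hN0 x x
  have idY := append_id hN0 y y
  rw [← hdxm, ← hdym, ← hLxd, ← hLyd, ← hx'd, ← hy'd] at idS
  rw [← hdxm, ← hLxd, ← hx'd] at idX
  rw [← hdym, ← hLyd, ← hy'd] at idY
  have ex' : (∑ i, (center x i)^2) = ∑ i, center x i * center x i := by simp [sq]
  have ey' : (∑ i, (center y i)^2) = ∑ i, center y i * center y i := by simp [sq]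
  have ex : (∑ j, (center x' j)^2) = ∑ j, center x' j * center x' j := by simp [sq]
  have ey : (∑ j, (center y' j)^2) = ∑ j, center y' j * center y' j := by simp [sq]
  -- bounds on last terms
  have hlx : |Lx| ≤ 2*B := by rw [hLxd]; exact habs2 _ _ (hx _) hAxb
  have hly : |Ly| ≤ 2*B := by rw [hLyd]; exact habs2 _ _ (hy _) hAyb
  have hlx2 : Lx^2 ≤ 4*B^2 := by nlinarith [abs_le.1 hlx, sq_abs Lx, abs_nonneg Lx]
  have hly2 : Ly^2 ≤ 4*B^2 := by nlinarith [abs_le.1 hly, sq_abs Ly, abs_nonneg Ly]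
  have hNdx2 : (N:ℝ) * dxm^2 ≤ 4*B^2 := by
    have h := hprod dxm dxm hdxb hdxb
    calc (N:ℝ) * dxm^2 = (N:ℝ) * |dxm| * |dxm| := by rw [pow_two, ← abs_mul_abs_self dxm]; ring
      _ ≤ 4*B^2 := h
  have hNdy2 : (N:ℝ) * dym^2 ≤ 4*B^2 := by
    have h := hprod dym dym hdyb hdyb
    calc (N:ℝ) * dym^2 = (N:ℝ) * |dym| * |dym| := by rw [pow_two, ← abs_mul_abs_self dym]; ring
      _ ≤ 4*B^2 := h
  have hxle : (∑ j, (center x' j)^2) ≤ ∑ i, (center x i)^2 := by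
    rw [ex, ex', idX]; nlinarith [sq_nonneg dxm, sq_nonneg Lx, hNR]
  have hyle : (∑ j, (center y' j)^2) ≤ ∑ i, (center y i)^2 := by
    rw [ey, ey', idY]; nlinarith [sq_nonneg dym, sq_nonneg Ly, hNR]
  have hdiffx : (∑ i, (center x i)^2) - (∑ j, (center x' j)^2) ≤ 8*B^2 := by
    rw [ex, ex', idX]; nlinarith [hlx2, hNdx2]
  have hdiffy : (∑ i, (center y i)^2) - (∑ j, (center y' j)^2) ≤ 8*B^2 := by
    rw [ey, ey', idY]; nlinarith [hly2, hNdy2]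
  -- S difference bound
  have hSdiff : |(∑ i, center x i * center y i) - (∑ j, center x' j * center y' j)| ≤ 8*B^2 := by
    rw [idS, show (∑ j, center x' j * center y' j) + (N:ℝ) * dxm * dym + Lx * Ly - (∑ j, center x' j * center y' j) = (N:ℝ) * dxm * dym + Lx * Ly from by ring]
    have h1 : |(N:ℝ) * dxm * dym| ≤ 4*B^2 := by
      rw [abs_mul, abs_mul, abs_of_nonneg (by positivity : (0:ℝ) ≤ (N:ℝ))]
      exact hprod dxm dym hdxb hdyb
    have h2 : |Lx * Ly| ≤ 4*B^2 := by
      rw [abs_mul]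
      calc |Lx| * |Ly| ≤ (2*B) * (2*B) := mul_le_mul hlx hly (abs_nonneg _) (by linarith)
        _ = 4*B^2 := by ring
    have h3 := abs_add_le ((N:ℝ) * dxm * dym) (Lx * Ly)
    linarith
  -- Cauchy-Schwarz
  have hCS : (∑ j, center x' j * center y' j)^2 ≤ (∑ j, (center x' j)^2) * (∑ j, (center y' j)^2) :=
    Finset.sum_mul_sq_le_sq_mul_sq _ _ _
  -- conclude
  simp only [pcorr, vnorm]
  exact main_arith _ _ _ _ _ _ (N:ℝ) v B hNR hv hQxN hQyN hQx1 hQy1 hxle hyle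
    hdiffx hdiffy hSdiff hCS
end

section
/- If u = a·v + e pointwise with a > 0, and v has nonzero centered norm, then corr(u, v) ≥ 1 − ||ē||/(a·||v̄||) · 2, i.e., the Pearson correlation of u and v is at least 1 − 2||ē||/(a||v̄||). -/
lemma center_linear {n : ℕ} (v e : Fin n → ℝ) (a : ℝ) (i : Fin n) :
    center (fun i => a * v i + e i) i = a * center v i + center e i := by
  simp only [center, Finset.sum_add_distrib, ← Finset.mul_sum, add_div, mul_div_assoc]
  ring

lemma vnorm_eq_s15 {n : ℕ} (w : Fin n → ℝ) :
    vnorm w = ‖(WithLp.toLp 2 w : EuclideanSpace ℝ (Fin n))‖ := by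
  rw [EuclideanSpace.norm_eq, vnorm]
  congr 1
  refine Finset.sum_congr rfl fun i _ => ?_
  rw [Real.norm_eq_abs, sq_abs]

lemma sum_eq_inner {n : ℕ} (x y : Fin n → ℝ) :
    (∑ i, x i * y i) =
      (inner ℝ (WithLp.toLp 2 x : EuclideanSpace ℝ (Fin n)) (WithLp.toLp 2 y : EuclideanSpace ℝ (Fin n)) : ℝ) := by
  rw [PiLp.inner_apply]
  simp [RCLike.inner_apply, mul_comm]

lemma real_aux (I nU nV nE a : ℝ) (ha : 0 < a) (hV : 0 < nV) (hE : 0 ≤ nE)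
    (hU : 0 ≤ nU) (h1 : a * nV ^ 2 - nE * nV ≤ I) (h2 : |I| ≤ nU * nV)
    (h3 : nU ≤ a * nV + nE) :
    1 - 2 * nE / (a * nV) ≤ I / (nU * nV) := by
  obtain ⟨h2a, h2b⟩ := abs_le.mp h2
  have hav : 0 < a * nV := mul_pos ha hV
  rcases eq_or_lt_of_le hU with h0 | h0
  · -- nU = 0
    have hI0 : I = 0 := by nlinarith [abs_nonneg I, abs_le.mp h2]
    rw [← h0]
    simp only [hI0, zero_mul, div_zero]
    -- need 1 - 2*nE/(a*nV) ≤ 0, since a*nV ≤ nE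
    have hle : a * nV ≤ nE := by nlinarith
    rw [sub_nonpos, le_div_iff₀ hav]
    nlinarith
  · have heq : 1 - 2 * nE / (a * nV) = (a * nV - 2 * nE) / (a * nV) := by
      field_simp
    rw [heq, div_le_div_iff₀ hav (mul_pos h0 hV)]
    rcases le_or_gt nE (a * nV) with hc | hc
    · rcases le_or_gt (2 * nE) (a * nV) with hd | hd
      · nlinarith [mul_le_mul_of_nonneg_right h3 hV.le, mul_nonneg hE hV.le,
          mul_nonneg (mul_nonneg hE hE) hV.le]
      · nlinarith [mul_nonneg h0.le hV.le, mul_nonneg hE hV.le]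
    · nlinarith [mul_nonneg h0.le hV.le]

theorem corr_lower_bound_of_linear_plus_error {N : ℕ}
    (u v e : Fin N → ℝ) (a : ℝ) (ha : 0 < a)
    (hu : u = fun i => a * v i + e i)
    (hv : vnorm (center v) ≠ 0) :
    1 - 2 * vnorm (center e) / (a * vnorm (center v)) ≤ pcorr u v := by
  set V : EuclideanSpace ℝ (Fin N) := WithLp.toLp 2 (center v) with hV
  set E : EuclideanSpace ℝ (Fin N) := WithLp.toLp 2 (center e) with hE
  have hcu : (center u : Fin N → ℝ) = fun i => a * center v i + center e i := by
    subst hu; funext i; exact center_linear v e a i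
  set U : EuclideanSpace ℝ (Fin N) := a • V + E with hUdef
  have hcu' : (WithLp.toLp 2 (center u) : EuclideanSpace ℝ (Fin N)) = U := by
    ext i
    rw [hcu]
    simp [hUdef, hV, hE]
  have hnv : vnorm (center v) = ‖V‖ := vnorm_eq_s15 _
  have hne : vnorm (center e) = ‖E‖ := vnorm_eq_s15 _
  have hnu : vnorm (center u) = ‖U‖ := by rw [vnorm_eq_s15, hcu']
  have hVpos : 0 < ‖V‖ := by
    rw [hnv] at hv; exact lt_of_le_of_ne (norm_nonneg _) (Ne.symm hv)
  have hinner : (∑ i, center u i * center v i) = (inner ℝ U V : ℝ) := by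
    rw [sum_eq_inner, hcu']
  have hI1 : a * ‖V‖ ^ 2 - ‖E‖ * ‖V‖ ≤ (inner ℝ U V : ℝ) := by
    have : (inner ℝ U V : ℝ) = a * ‖V‖ ^ 2 + (inner ℝ E V : ℝ) := by
      rw [hUdef, inner_add_left, real_inner_smul_left, real_inner_self_eq_norm_sq]
    rw [this]
    have := abs_real_inner_le_norm E V
    have h := (abs_le.mp this).1
    linarith
  have hI2 : |(inner ℝ U V : ℝ)| ≤ ‖U‖ * ‖V‖ := abs_real_inner_le_norm U V
  have hU3 : ‖U‖ ≤ a * ‖V‖ + ‖E‖ := by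
    calc ‖U‖ ≤ ‖a • V‖ + ‖E‖ := norm_add_le _ _
    _ = a * ‖V‖ + ‖E‖ := by rw [norm_smul, Real.norm_eq_abs, abs_of_pos ha]
  rw [pcorr, hinner, hnu, hnv, hne]
  exact real_aux _ _ _ _ _ ha hVpos (norm_nonneg _) (norm_nonneg _) hI1 hI2 hU3
end

section
/- The Jaccard distance d(A,B) = 1 − |A∩B|/|A∪B| satisfies the triangle inequality on finite sets: for finite sets A, B, C (with pairwise unions nonempty), d(A,C) ≤ d(A,B) + d(B,C). -/
private lemma card_union_eq_inter_add_symmDiff {α : Type*} [DecidableEq α] (A C : Finset α) :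
    (A ∪ C).card = (A ∩ C).card + (symmDiff A C).card := by
  rw [← Finset.card_union_of_disjoint]
  · congr 1
    ext x
    simp [Finset.mem_symmDiff]
    tauto
  · rw [Finset.disjoint_left]
    intro x hx hx'
    simp [Finset.mem_symmDiff] at *
    tauto

private lemma aux_div (x m k : ℝ) (hm : 0 < m) (hx : x ≤ m) (hk : 0 ≤ k) :
    x / m ≤ (x + k) / (m + k) := by
  rw [div_le_div_iff₀ hm (by linarith)]
  nlinarith

set_option maxHeartbeats 1000000 in
theorem jaccard_distance_triangle {α : Type*} [DecidableEq α] (A B C : Finset α)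
    (hAB : (A ∪ B).Nonempty) (hBC : (B ∪ C).Nonempty) (hAC : (A ∪ C).Nonempty) :
    1 - ((A ∩ C).card : ℝ) / ((A ∪ C).card : ℝ) ≤
      (1 - ((A ∩ B).card : ℝ) / ((A ∪ B).card : ℝ)) +
        (1 - ((B ∩ C).card : ℝ) / ((B ∪ C).card : ℝ)) := by
  have hACe := card_union_eq_inter_add_symmDiff A C
  have hABe := card_union_eq_inter_add_symmDiff A B
  have hBCe := card_union_eq_inter_add_symmDiff B C
  set K : Finset α := B \ (A ∪ C) with hK
  -- n = |A ∪ B ∪ C|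
  have hn : (A ∪ B ∪ C).card = (A ∪ C).card + K.card := by
    rw [← Finset.card_union_of_disjoint]
    · congr 1
      ext x; simp [hK]; tauto
    · rw [Finset.disjoint_left]
      intro x hx hx'
      simp [hK] at *
      tauto
  -- key combinatorial inequality
  have hkey : (symmDiff A C).card + K.card ≤ (symmDiff A B).card + (symmDiff B C).card := by
    have hdisj : Disjoint (symmDiff A C) K := by
      rw [Finset.disjoint_left]
      intro x hx hx'
      simp [hK, Finset.mem_symmDiff] at *
      tauto
    have hsub : (symmDiff A C) ∪ K ⊆ (symmDiff A B) ∪ (symmDiff B C) := by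
      intro x hx
      simp [hK, Finset.mem_symmDiff] at *
      tauto
    calc (symmDiff A C).card + K.card = ((symmDiff A C) ∪ K).card :=
          (Finset.card_union_of_disjoint hdisj).symm
      _ ≤ ((symmDiff A B) ∪ (symmDiff B C)).card := Finset.card_le_card hsub
      _ ≤ (symmDiff A B).card + (symmDiff B C).card := Finset.card_union_le _ _
  -- positivity
  have pAC : (0:ℝ) < (A ∪ C).card := by exact_mod_cast Finset.card_pos.mpr hAC
  have pAB : (0:ℝ) < (A ∪ B).card := by exact_mod_cast Finset.card_pos.mpr hAB
  have pBC : (0:ℝ) < (B ∪ C).card := by exact_mod_cast Finset.card_pos.mpr hBC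
  have hABn : (A ∪ B).card ≤ (A ∪ B ∪ C).card :=
    Finset.card_le_card (by intro x hx; simp at *; tauto)
  have hBCn : (B ∪ C).card ≤ (A ∪ B ∪ C).card :=
    Finset.card_le_card (by intro x hx; simp at *; tauto)
  have pn : (0:ℝ) < (A ∪ B ∪ C).card := by
    have : (A ∪ C).card ≤ (A ∪ B ∪ C).card := by omega
    exact lt_of_lt_of_le pAC (by exact_mod_cast this)
  -- cast everything to ℝ
  have hACe' : ((A ∪ C).card : ℝ) = (A ∩ C).card + (symmDiff A C).card := by exact_mod_cast hACe
  have hABe' : ((A ∪ B).card : ℝ) = (A ∩ B).card + (symmDiff A B).card := by exact_mod_cast hABe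
  have hBCe' : ((B ∪ C).card : ℝ) = (B ∩ C).card + (symmDiff B C).card := by exact_mod_cast hBCe
  have hn' : ((A ∪ B ∪ C).card : ℝ) = (A ∪ C).card + K.card := by exact_mod_cast hn
  have hkey' : ((symmDiff A C).card : ℝ) + K.card ≤ (symmDiff A B).card + (symmDiff B C).card := by
    exact_mod_cast hkey
  have hABn' : ((A ∪ B).card : ℝ) ≤ (A ∪ B ∪ C).card := by exact_mod_cast hABn
  have hBCn' : ((B ∪ C).card : ℝ) ≤ (A ∪ B ∪ C).card := by exact_mod_cast hBCn
  have e1 : 1 - ((A ∩ C).card : ℝ) / (A ∪ C).card = ((symmDiff A C).card : ℝ) / (A ∪ C).card := by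
    field_simp; linarith [hACe']
  have e2 : 1 - ((A ∩ B).card : ℝ) / (A ∪ B).card = ((symmDiff A B).card : ℝ) / (A ∪ B).card := by
    field_simp; linarith [hABe']
  have e3 : 1 - ((B ∩ C).card : ℝ) / (B ∪ C).card = ((symmDiff B C).card : ℝ) / (B ∪ C).card := by
    field_simp; linarith [hBCe']
  rw [e1, e2, e3]
  have step1 : ((symmDiff A C).card : ℝ) / (A ∪ C).card
      ≤ (((symmDiff A C).card : ℝ) + K.card) / (A ∪ B ∪ C).card := by
    have hle : ((symmDiff A C).card : ℝ) ≤ (A ∪ C).card := by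
      have h : (symmDiff A C).card ≤ (A ∪ C).card := by omega
      exact_mod_cast h
    rw [hn']
    exact aux_div _ _ _ pAC hle (Nat.cast_nonneg _)
  have step2 : (((symmDiff A C).card : ℝ) + K.card) / (A ∪ B ∪ C).card
      ≤ ((symmDiff A B).card : ℝ) / (A ∪ B ∪ C).card + ((symmDiff B C).card : ℝ) / (A ∪ B ∪ C).card := by
    rw [← add_div]
    exact div_le_div_of_nonneg_right hkey' pn.le |>.trans_eq rfl
  have step3 : ((symmDiff A B).card : ℝ) / (A ∪ B ∪ C).card ≤ ((symmDiff A B).card : ℝ) / (A ∪ B).card :=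
    div_le_div_of_nonneg_left (Nat.cast_nonneg _) pAB hABn'
  have step4 : ((symmDiff B C).card : ℝ) / (A ∪ B ∪ C).card ≤ ((symmDiff B C).card : ℝ) / (B ∪ C).card :=
    div_le_div_of_nonneg_left (Nat.cast_nonneg _) pBC hBCn'
  linarith
end
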